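/- arXiv:2105.02130 — 5 statements merged into one kernel-verified Lean document; each statement's English description precedes it below -/
import Mathlib

section
/- The set of ρ-regular points of a smooth Lie group action ρ : G × M → M is a G-invariant, open, dense subset of M. -/
open Manifold Module

section AuxLemmas

variable {E E' F F' : Type*}
  [TopologicalSpace E] [AddCommGroup E] [Module ℝ E] [IsTopologicalAddGroup E]
  [TopologicalSpace E'] [AddCommGroup E'] [Module ℝ E'] [IsTopologicalAddGroup E']
  [TopologicalSpace F] [AddCommGroup F] [Module ℝ F] [IsTopologicalAddGroup F]
  [TopologicalSpace F'] [AddCommGroup F'] [Module ℝ F'] [IsTopologicalAddGroup F']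

/-- Postcomposition with an injective continuous linear map does not change the kernel. -/
lemma aux_ker_comp (ψ : E →L[ℝ] F) (A : F →L[ℝ] F') (hA : Function.Injective A) :
    LinearMap.ker (A.comp ψ).toLinearMap = LinearMap.ker ψ.toLinearMap := by
  ext v
  simp only [LinearMap.mem_ker, ContinuousLinearMap.coe_comp', Function.comp_apply]
  constructor
  · intro h
    exact hA (by simpa using h)
  · intro h
    simp only [ContinuousLinearMap.coe_coe] at h
    simp [h]

/-- Precomposition with a continuous linear equivalence does not change the dimension of
the kernel. -/
lemma aux_finrank_ker_comp_equiv (ψ : E →L[ℝ] F) (e : E' ≃L[ℝ] E) :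
    finrank ℝ (LinearMap.ker (ψ.comp (e : E' →L[ℝ] E)).toLinearMap) = finrank ℝ (LinearMap.ker ψ.toLinearMap) := by
  have h : LinearMap.ker (ψ.comp (e : E' →L[ℝ] E)).toLinearMap =
      Submodule.comap (e.toLinearEquiv : E' →ₗ[ℝ] E) (LinearMap.ker ψ.toLinearMap) := by
    ext v
    simp [LinearMap.mem_ker]
  rw [h, Submodule.comap_equiv_eq_map_symm, LinearEquiv.finrank_map_eq]

end AuxLemmas

section AuxLemmas2

variable {E F : Type*} [NormedAddCommGroup E] [NormedSpace ℝ E]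
  [NormedAddCommGroup F] [NormedSpace ℝ F]

/-- The rank of a continuous family of continuous linear maps is lower semicontinuous. -/
lemma aux_eventually_finrank_range_le {X : Type*} [TopologicalSpace X]
    [FiniteDimensional ℝ F] {ψ : X → E →L[ℝ] F} {x₀ : X} (hψ : ContinuousAt ψ x₀) :
    ∀ᶠ x in nhds x₀, finrank ℝ (LinearMap.range (ψ x₀ : E →ₗ[ℝ] F)) ≤ finrank ℝ (LinearMap.range (ψ x : E →ₗ[ℝ] F)) := by
  set r := finrank ℝ (LinearMap.range (ψ x₀ : E →ₗ[ℝ] F)) with hr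
  have b := Module.finBasis ℝ (LinearMap.range (ψ x₀ : E →ₗ[ℝ] F))
  rw [← hr] at b
  have hu : ∀ i : Fin r, ∃ u : E, ψ x₀ u = (b i : F) := fun i => (b i).2
  choose u hu using hu
  have hind : LinearIndependent ℝ (fun i => ψ x₀ (u i)) := by
    have h1 : LinearIndependent ℝ (fun i => (b i : F)) :=
      b.linearIndependent.map' (Submodule.subtype _) (Submodule.ker_subtype _)
    simpa only [hu] using h1
  have hcont : ContinuousAt (fun x => fun i : Fin r => ψ x (u i)) x₀ := by
    apply continuousAt_pi.2
    intro i
    exact ((ContinuousLinearMap.apply ℝ F (u i)).continuous.continuousAt).comp hψ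
  have hev : ∀ᶠ x in nhds x₀, LinearIndependent ℝ (fun i : Fin r => ψ x (u i)) :=
    hcont.eventually hind.eventually
  filter_upwards [hev] with x hx
  have hx' : LinearIndependent ℝ
      (fun i : Fin r => (⟨ψ x (u i), LinearMap.mem_range_self _ _⟩ : LinearMap.range (ψ x : E →ₗ[ℝ] F))) :=
    LinearIndependent.of_comp (Submodule.subtype _) hx
  simpa using hx'.fintype_card_le_finrank

end AuxLemmas2

/-- The set of `ρ`-regular points of a smooth Lie group action
`ρ : G × M → M` (written `g • m`) is a `G`-invariant, open, dense subset of `M`.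
A point `m₀` is `ρ`-regular when the isotropy dimension `dim G_m` is constant for `m`
in a neighborhood of `m₀`, where `dim G_m` is encoded as the dimension of the isotropy
Lie algebra `𝔤_m = Ker (ρ_m)_{*,e}`. -/
theorem regular_points_invariant_open_dense
    {E : Type*} [NormedAddCommGroup E] [NormedSpace ℝ E] [FiniteDimensional ℝ E]
    {F : Type*} [NormedAddCommGroup F] [NormedSpace ℝ F] [FiniteDimensional ℝ F]
    {G : Type*} [TopologicalSpace G] [ChartedSpace E G] [Group G]
    {I : ModelWithCorners ℝ E E} [LieGroup I (⊤ : ℕ∞) G]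
    {M : Type*} [TopologicalSpace M] [ChartedSpace F M]
    {J : ModelWithCorners ℝ F F} [IsManifold J (⊤ : ℕ∞) M]
    [MulAction G M]
    (hρ : ContMDiff (I.prod J) J (⊤ : ℕ∞) fun p : G × M => p.1 • p.2)
    (isoDim : M → ℕ)
    (hdim : ∀ m : M, isoDim m =
      Module.finrank ℝ (LinearMap.ker (mfderiv I J (fun h : G => h • m) (1 : G)).toLinearMap))
    (R : Set M)
    (hR : R = {m₀ : M | ∀ᶠ m in nhds m₀, isoDim m = isoDim m₀}) :
    (∀ m ∈ R, ∀ g : G, g • m ∈ R) ∧ IsOpen R ∧ Dense R := by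
  -- Upper semicontinuity of `isoDim`.
  have usc : ∀ m₀ : M, ∀ᶠ m in nhds m₀, isoDim m ≤ isoDim m₀ := by
    intro m₀
    set T' : M → E →L[ℝ] F := inTangentCoordinates I J (fun _ : M => (1 : G)) (fun m : M => m)
      (fun m : M => mfderiv I J (fun h : G => h • m) (1 : G)) m₀ with hT'
    have hcont : ContinuousAt T' m₀ := by
      have hf : ContMDiffAt (J.prod I) J (⊤ : ℕ∞)
          (Function.uncurry fun (m : M) (h : G) => h • m) (m₀, (1 : G)) := by
        have h1 : ContMDiff (J.prod I) J (⊤ : ℕ∞) (fun p : M × G => p.2 • p.1) :=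
          hρ.comp (contMDiff_snd.prodMk contMDiff_fst)
        exact h1.contMDiffAt
      have hg : ContMDiffAt J I 0 (fun _ : M => (1 : G)) m₀ := contMDiffAt_const
      have key := ContMDiffAt.mfderiv (fun (m : M) (h : G) => h • m)
        (fun _ : M => (1 : G)) hf hg (by rw [zero_add]; exact_mod_cast le_top)
      have key2 := key.continuousAt
      simp only [one_smul] at key2
      exact key2
    -- identify the kernel of `T' m` for `m` in the chart at `m₀`
    have hker : ∀ m ∈ (chartAt F m₀).source,
        finrank ℝ (LinearMap.ker (T' m).toLinearMap) = isoDim m := by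
      intro m hm
      have h1 := inTangentCoordinates_eq (I := I) (I' := J) (fun _ : M => (1 : G))
        (fun m' : M => m')
        (fun m' : M => (mfderiv I J (fun h : G => h • m') (1 : G) : E →L[ℝ] F))
        (x₀ := m₀) (x := m) (mem_chart_source E (1 : G)) (by exact hm)
      have hright : (mfderiv I J (fun h : G => h • m) (1 : G)).comp
          ((tangentBundleCore I G).coordChange (achart E (1 : G)) (achart E (1 : G)) (1 : G)) =
          mfderiv I J (fun h : G => h • m) (1 : G) := by
        ext v
        show (mfderiv I J (fun h : G => h • m) (1 : G)) (((tangentBundleCore I G).coordChange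
          (achart E (1 : G)) (achart E (1 : G)) (1 : G)) v) = _
        congr 1
        exact (tangentBundleCore I G).coordChange_self (achart E (1 : G)) (1 : G)
          (mem_chart_source E (1 : G)) v
      have hinj : Function.Injective
          ((tangentBundleCore J M).coordChange (achart F m) (achart F m₀) m) := by
        have hmem : m ∈ (tangentBundleCore J M).baseSet (achart F m) ∩
            (tangentBundleCore J M).baseSet (achart F m₀) ∩
            (tangentBundleCore J M).baseSet (achart F m) :=
          ⟨⟨mem_chart_source F m, hm⟩, mem_chart_source F m⟩
        have hli : ∀ v, (tangentBundleCore J M).coordChange (achart F m₀) (achart F m) m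
            ((tangentBundleCore J M).coordChange (achart F m) (achart F m₀) m v) = v := by
          intro v
          rw [(tangentBundleCore J M).coordChange_comp _ _ _ _ hmem v]
          exact (tangentBundleCore J M).coordChange_self (achart F m) m
            (mem_chart_source F m) v
        exact Function.LeftInverse.injective hli
      rw [hT', h1]
      beta_reduce
      rw [aux_ker_comp _ _ hinj]
      exact (congrArg (fun f : E →L[ℝ] F => finrank ℝ (LinearMap.ker f.toLinearMap)) hright).trans
        (hdim m).symm
    -- rank-nullity for `T'`
    have hrn : ∀ m : M, finrank ℝ (LinearMap.range (T' m : E →ₗ[ℝ] F)) + finrank ℝ (LinearMap.ker (T' m).toLinearMap) =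
        finrank ℝ E := fun m => LinearMap.finrank_range_add_finrank_ker (T' m : E →ₗ[ℝ] F)
    have hrk := aux_eventually_finrank_range_le hcont
    have hU : ∀ᶠ m in nhds m₀, m ∈ (chartAt F m₀).source :=
      (chartAt F m₀).open_source.eventually_mem (mem_chart_source F m₀)
    filter_upwards [hrk, hU] with m h1 h2
    have e1 := hker m h2
    have e2 := hker m₀ (mem_chart_source F m₀)
    have r1 := hrn m
    have r2 := hrn m₀
    omega
  -- Invariance of `isoDim` under the action.
  have keyInv : ∀ (g : G) (m : M), isoDim (g • m) = isoDim m := by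
    intro g m
    have hL : ContMDiff J J (⊤ : ℕ∞) (fun x : M => g • x) :=
      hρ.comp (contMDiff_const.prodMk contMDiff_id)
    have hL' : ContMDiff J J (⊤ : ℕ∞) (fun x : M => g⁻¹ • x) :=
      hρ.comp (contMDiff_const.prodMk contMDiff_id)
    have hα : ContMDiff I J (⊤ : ℕ∞) (fun h : G => h • m) :=
      hρ.comp (contMDiff_id.prodMk contMDiff_const)
    have hc : ContMDiff I I (⊤ : ℕ∞) (fun h : G => g⁻¹ * h * g) :=
      (contMDiff_const.mul contMDiff_id).mul contMDiff_const
    have hc' : ContMDiff I I (⊤ : ℕ∞) (fun h : G => g * h * g⁻¹) :=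
      (contMDiff_const.mul contMDiff_id).mul contMDiff_const
    have hfun : (fun h : G => h • (g • m)) =
        (fun x : M => g • x) ∘ ((fun h : G => h • m) ∘ (fun h : G => g⁻¹ * h * g)) := by
      funext h
      simp only [Function.comp_apply, ← mul_smul]
      congr 1
      group
    have step1 : mfderiv I J (fun h : G => h • (g • m)) 1 =
        (mfderiv J J (fun x : M => g • x)
            (((fun h : G => h • m) ∘ (fun h : G => g⁻¹ * h * g)) 1)).comp
          (mfderiv I J ((fun h : G => h • m) ∘ (fun h : G => g⁻¹ * h * g)) 1) := by
      rw [hfun]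
      exact mfderiv_comp 1 (hL.mdifferentiableAt (by simp))
        ((hα.comp hc).mdifferentiableAt (by simp))
    have step2 : mfderiv I J ((fun h : G => h • m) ∘ (fun h : G => g⁻¹ * h * g)) 1 =
        (mfderiv I J (fun h : G => h • m) ((fun h : G => g⁻¹ * h * g) 1)).comp
          (mfderiv I I (fun h : G => g⁻¹ * h * g) 1) :=
      mfderiv_comp 1 (hα.mdifferentiableAt (by simp)) (hc.mdifferentiableAt (by simp))
    simp only [Function.comp_apply] at step1 step2
    have e1 : (g⁻¹ * 1 * g : G) = 1 := by group
    have e2 : (g * 1 * g⁻¹ : G) = 1 := by group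
    have em : (g⁻¹ * 1 * g : G) • m = m := by rw [e1, one_smul]
    have hptL : mfderiv J J (fun x : M => g • x) ((g⁻¹ * 1 * g : G) • m) =
        mfderiv J J (fun x : M => g • x) m := by rw [em]
    have hptα : mfderiv I J (fun h : G => h • m) (g⁻¹ * 1 * g : G) =
        mfderiv I J (fun h : G => h • m) 1 := by rw [e1]
    rw [hptL] at step1
    rw [hptα] at step2
    -- injectivity of the derivative of the translation `x ↦ g • x`
    have hAinv : mfderiv J J ((fun x : M => g⁻¹ • x) ∘ (fun x : M => g • x)) m =
        (mfderiv J J (fun x : M => g⁻¹ • x) ((fun x : M => g • x) m)).comp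
          (mfderiv J J (fun x : M => g • x) m) :=
      mfderiv_comp m (hL'.mdifferentiableAt (by simp)) (hL.mdifferentiableAt (by simp))
    have hid : ((fun x : M => g⁻¹ • x) ∘ (fun x : M => g • x)) = (id : M → M) := by
      funext x
      simp [inv_smul_smul]
    rw [hid, mfderiv_id] at hAinv
    have hA : Function.Injective (mfderiv J J (fun x : M => g • x) m) := by
      intro a b hab
      have h3 : a = (mfderiv J J (fun x : M => g⁻¹ • x) ((fun x : M => g • x) m))
          ((mfderiv J J (fun x : M => g • x) m) a) := DFunLike.congr_fun hAinv a
      have h4 : b = (mfderiv J J (fun x : M => g⁻¹ • x) ((fun x : M => g • x) m))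
          ((mfderiv J J (fun x : M => g • x) m) b) := DFunLike.congr_fun hAinv b
      rw [h3, h4, hab]
    -- the derivative of conjugation is a linear equivalence
    have hcinv : mfderiv I I ((fun h : G => g * h * g⁻¹) ∘ (fun h : G => g⁻¹ * h * g)) 1 =
        (mfderiv I I (fun h : G => g * h * g⁻¹) ((fun h : G => g⁻¹ * h * g) 1)).comp
          (mfderiv I I (fun h : G => g⁻¹ * h * g) 1) :=
      mfderiv_comp 1 (hc'.mdifferentiableAt (by simp)) (hc.mdifferentiableAt (by simp))
    have hcinv' : mfderiv I I ((fun h : G => g⁻¹ * h * g) ∘ (fun h : G => g * h * g⁻¹)) 1 =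
        (mfderiv I I (fun h : G => g⁻¹ * h * g) ((fun h : G => g * h * g⁻¹) 1)).comp
          (mfderiv I I (fun h : G => g * h * g⁻¹) 1) :=
      mfderiv_comp 1 (hc.mdifferentiableAt (by simp)) (hc'.mdifferentiableAt (by simp))
    have hid1 : ((fun h : G => g * h * g⁻¹) ∘ (fun h : G => g⁻¹ * h * g)) = (id : G → G) := by
      funext h
      simp only [Function.comp_apply, id_eq]
      group
    have hid2 : ((fun h : G => g⁻¹ * h * g) ∘ (fun h : G => g * h * g⁻¹)) = (id : G → G) := by
      funext h
      simp only [Function.comp_apply, id_eq]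
      group
    rw [hid1, mfderiv_id] at hcinv
    rw [hid2, mfderiv_id] at hcinv'
    simp only [Function.comp_apply] at hcinv hcinv'
    have hptc' : mfderiv I I (fun h : G => g * h * g⁻¹) (g⁻¹ * 1 * g : G) =
        mfderiv I I (fun h : G => g * h * g⁻¹) 1 := by rw [e1]
    have hptc : mfderiv I I (fun h : G => g⁻¹ * h * g) (g * 1 * g⁻¹ : G) =
        mfderiv I I (fun h : G => g⁻¹ * h * g) 1 := by rw [e2]
    rw [hptc'] at hcinv
    rw [hptc] at hcinv'
    let e : TangentSpace I (1 : G) ≃L[ℝ] TangentSpace I (1 : G) :=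
      ContinuousLinearEquiv.equivOfInverse (mfderiv I I (fun h : G => g⁻¹ * h * g) 1)
        (mfderiv I I (fun h : G => g * h * g⁻¹) 1)
        (fun v => (DFunLike.congr_fun hcinv v).symm)
        (fun v => (DFunLike.congr_fun hcinv' v).symm)
    have hD : mfderiv I J (fun h : G => h • (g • m)) 1 =
        (mfderiv J J (fun x : M => g • x) m).comp
          ((mfderiv I J (fun h : G => h • m) 1).comp
            (mfderiv I I (fun h : G => g⁻¹ * h * g) 1)) := by
      rw [step1, step2]
      rfl
    have heq1 : LinearMap.ker (mfderiv I J (fun h : G => h • (g • m)) 1).toLinearMap =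
        LinearMap.ker ((mfderiv I J (fun h : G => h • m) 1).comp
          (mfderiv I I (fun h : G => g⁻¹ * h * g) 1)).toLinearMap := by
      rw [hD]
      exact aux_ker_comp _ _ hA
    have heq2 : finrank ℝ (LinearMap.ker ((mfderiv I J (fun h : G => h • m) 1).comp
        (mfderiv I I (fun h : G => g⁻¹ * h * g) 1)).toLinearMap) =
        finrank ℝ (LinearMap.ker (mfderiv I J (fun h : G => h • m) 1).toLinearMap) :=
      aux_finrank_ker_comp_equiv (mfderiv I J (fun h : G => h • m) 1) e
    rw [hdim (g • m), hdim m, heq1, heq2]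
  -- Openness
  have hopen : IsOpen R := by
    rw [isOpen_iff_mem_nhds]
    intro m₀ hm₀
    rw [hR] at hm₀
    have h2 := hm₀.eventually_nhds
    have : ∀ᶠ m₁ in nhds m₀, m₁ ∈ R := by
      filter_upwards [h2, hm₀] with m₁ h1 hval
      rw [hR]
      filter_upwards [h1] with m hm
      rw [hm, hval]
    exact this
  refine ⟨?_, hopen, ?_⟩
  · -- invariance
    intro m hm g
    rw [hR] at hm ⊢
    have hcont : ContinuousAt (fun x : M => g⁻¹ • x) (g • m) := by
      have : ContMDiff J J (⊤ : ℕ∞) (fun x : M => g⁻¹ • x) :=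
        hρ.comp (contMDiff_const.prodMk contMDiff_id)
      exact this.continuous.continuousAt
    have hval : (g⁻¹ : G) • (g • m) = m := inv_smul_smul g m
    have hev : ∀ᶠ x in nhds (g • m), isoDim (g⁻¹ • x) = isoDim m := by
      have h0 : ∀ᶠ y in nhds ((g⁻¹ : G) • (g • m)), isoDim y = isoDim m := by
        rw [hval]
        exact hm
      exact hcont.eventually h0
    filter_upwards [hev] with x hx
    have h1 := keyInv g⁻¹ x
    have h2 := keyInv g m
    omega
  · -- density
    rw [dense_iff_inter_open]
    rintro U hU ⟨x, hx⟩
    have hne : (isoDim '' U).Nonempty := ⟨isoDim x, x, hx, rfl⟩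
    obtain ⟨m₁, hm₁U, hm₁k⟩ := Nat.sInf_mem hne
    refine ⟨m₁, hm₁U, ?_⟩
    rw [hR]
    filter_upwards [usc m₁, hU.eventually_mem hm₁U] with m h1 h2
    have h3 : sInf (isoDim '' U) ≤ isoDim m := Nat.sInf_le ⟨m, h2, rfl⟩
    omega
end

section
/- Let X be a vector field on M of the form X(m) = (ρ_m)_{*,e}(η(m)) for a smooth map η : M → 𝔤. Then X is G-invariant (i.e. (ρ_g)_* ∘ X = X ∘ ρ_g for all g) if and only if for all g ∈ G and m ∈ M, η(ρ_g(m)) − Ad_g(η(m)) ∈ 𝔤_{ρ_g(m)}. -/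
open Manifold

/-- Let `X` be a vector field on `M` of the form
`X(m) = (ρ_m)_{*,e}(η(m))` for a smooth map `η : M → 𝔤`.  Then `X` is `G`-invariant
(i.e. `(ρ_g)_* ∘ X = X ∘ ρ_g` for all `g`) if and only if for all `g ∈ G` and `m ∈ M`,
`η(ρ_g(m)) − Ad_g(η(m)) ∈ 𝔤_{ρ_g(m)}`, where `Ad_g` is the differential at the identity
of conjugation by `g` and `𝔤_m = Ker (ρ_m)_{*,e}`. -/
theorem invariant_vertical_field_iff_Ad_equivariant_up_to_isotropy
    {E : Type*} [NormedAddCommGroup E] [NormedSpace ℝ E] [FiniteDimensional ℝ E]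
    {F : Type*} [NormedAddCommGroup F] [NormedSpace ℝ F] [FiniteDimensional ℝ F]
    {G : Type*} [TopologicalSpace G] [ChartedSpace E G] [Group G]
    {I : ModelWithCorners ℝ E E} [LieGroup I (⊤ : ℕ∞) G]
    {M : Type*} [TopologicalSpace M] [ChartedSpace F M]
    {J : ModelWithCorners ℝ F F} [IsManifold J (⊤ : ℕ∞) M]
    [MulAction G M]
    (hρ : ContMDiff (I.prod J) J (⊤ : ℕ∞) fun p : G × M => p.1 • p.2)
    (η : M → E) (hη : ContMDiff J 𝓘(ℝ, E) (⊤ : ℕ∞) η)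
    (X : ∀ m : M, TangentSpace J m)
    (hX : ∀ m : M, X m = mfderiv I J (fun g : G => g • m) (1 : G) (η m))
    -- the adjoint representation: `Ad g` is the differential at `e` of conjugation by `g`:
    (Ad : G → E →L[ℝ] E)
    (hAd : ∀ g : G, Ad g = mfderiv I I (fun h : G => g * h * g⁻¹) (1 : G)) :
    (∀ (g : G) (m : M), mfderiv J J (fun x : M => g • x) m (X m) = X (g • m)) ↔
      (∀ (g : G) (m : M),
        η (g • m) - Ad g (η m)
          ∈ (LinearMap.ker (ContinuousLinearMap.toLinearMap (M := E) (M₂ := F)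
              (mfderiv I J (fun h : G => h • (g • m)) (1 : G))) :
              Submodule ℝ E)) := by
  have smooth_orbit : ∀ m : M, ContMDiff I J (⊤ : ℕ∞) (fun h : G => h • m) := fun m =>
    hρ.comp (contMDiff_id.prodMk contMDiff_const)
  have smooth_smul : ∀ g : G, ContMDiff J J (⊤ : ℕ∞) (fun x : M => g • x) := fun g =>
    hρ.comp (contMDiff_const.prodMk contMDiff_id)
  have smooth_conj : ∀ g : G, ContMDiff I I (⊤ : ℕ∞) (fun h : G => g * h * g⁻¹) := fun g =>
    (contMDiff_const.mul contMDiff_id).mul contMDiff_const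
  have key : ∀ (g : G) (m : M),
      mfderiv J J (fun x : M => g • x) m (X m)
        = mfderiv I J (fun h : G => h • (g • m)) (1 : G) (Ad g (η m)) := by
    intro g m
    have h1 := mfderiv_comp (I' := J) (x := (1 : G))
      (((smooth_smul g).mdifferentiableAt (by simp)))
      (((smooth_orbit m).mdifferentiableAt (by simp)))
    have funeq : ((fun x : M => g • x) ∘ fun h : G => h • m)
        = (fun h : G => h • (g • m)) ∘ fun h : G => g * h * g⁻¹ := by
      funext h
      show g • h • m = (g * h * g⁻¹) • g • m
      rw [smul_smul, smul_smul]
      congr 1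
      group
    have h2 := mfderiv_comp (I' := I) (x := (1 : G))
      (((smooth_orbit (g • m)).mdifferentiableAt (by simp)))
      (((smooth_conj g).mdifferentiableAt (by simp)))
    rw [funeq] at h1
    have e1 : (g * 1 * g⁻¹ : G) = 1 := by group
    rw [e1] at h2
    rw [hX m]
    have := h1.symm.trans h2
    have h3 : mfderiv J J (fun x : M => g • x) ((1 : G) • m) (mfderiv I J (fun h : G => h • m) (1 : G) (η m))
        = mfderiv I J (fun h : G => h • (g • m)) (1 : G)
            (mfderiv I I (fun h : G => g * h * g⁻¹) (1 : G) (η m)) := by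
      have := congrFun (congrArg DFunLike.coe this) (η m)
      exact this
    rw [one_smul] at h3
    rw [hAd]; exact h3
  constructor
  · intro h g m
    change (mfderiv I J (fun h : G => h • (g • m)) (1 : G)) (η (g • m) - Ad g (η m)) = 0
    refine (map_sub (mfderiv I J (fun h : G => h • (g • m)) (1 : G)) (η (g • m)) (Ad g (η m))).trans (sub_eq_zero.mpr ?_)
    have h4 := (key g m).symm.trans (h g m)
    rw [hX (g • m)] at h4
    exact h4.symm
  · intro h g m
    have h4 := h g m
    change (mfderiv I J (fun h : G => h • (g • m)) (1 : G)) (η (g • m) - Ad g (η m)) = 0 at h4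
    replace h4 := sub_eq_zero.mp ((map_sub (mfderiv I J (fun h : G => h • (g • m)) (1 : G)) (η (g • m)) (Ad g (η m))).symm.trans h4)
    rw [key, hX (g • m)]
    exact h4.symm
end

section
/- Let (M, ω) be a symplectic manifold, ρ a symplectic G-action with Ad*-equivariant momentum map K : M → 𝔤*, and φ : 𝔤* → 𝔤 an equivariant map (Ad_g φ(α) = φ(Ad*_g α) for all g, α). Then the vector field X = ω^♯ ∘ K*φ, i.e. X(m) = ω_m^♯(K_m^*(φ(K(m)))), is G-invariant: (ρ_g)_{*,m}(X(m)) = X(ρ_g(m)) for all g ∈ G, m ∈ M. -/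
open Manifold

/-- Let `(M, ω)` be a symplectic manifold, `ρ` a symplectic `G`-action
(written `g • m`) with `Ad*`-equivariant momentum map `K : M → 𝔤*`, and
`φ : 𝔤* → 𝔤` an equivariant map (`Ad_g φ(α) = φ(Ad*_g α)`).  Then the vector field
`X = ω^♯ ∘ K^*φ` — characterized by `ω_m(X(m), v) = ⟨K_{*,m}(v), φ(K(m))⟩` — is
`G`-invariant: `(ρ_g)_{*,m}(X(m)) = X(ρ_g(m))` for all `g ∈ G`, `m ∈ M`. -/
theorem momentum_casimir_field_invariant
    {E : Type*} [NormedAddCommGroup E] [NormedSpace ℝ E] [FiniteDimensional ℝ E]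
    {F : Type*} [NormedAddCommGroup F] [NormedSpace ℝ F] [FiniteDimensional ℝ F]
    {G : Type*} [TopologicalSpace G] [ChartedSpace E G] [Group G]
    {I : ModelWithCorners ℝ E E} [LieGroup I (⊤ : ℕ∞) G]
    {M : Type*} [TopologicalSpace M] [ChartedSpace F M]
    {J : ModelWithCorners ℝ F F} [IsManifold J (⊤ : ℕ∞) M]
    [MulAction G M]
    (hρ : ContMDiff (I.prod J) J (⊤ : ℕ∞) fun p : G × M => p.1 • p.2)
    -- the symplectic form:
    (ω : ∀ m : M, TangentSpace J m →L[ℝ] TangentSpace J m →L[ℝ] ℝ)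
    (hω_alt : ∀ (m : M) (v : TangentSpace J m), ω m v v = 0)
    (hω_nd : ∀ (m : M) (v : TangentSpace J m), (∀ w, ω m v w = 0) → v = 0)
    -- the differential at `e` of the orbit map `ρ_m : g ↦ g • m`:
    (dρ : ∀ m : M, E →L[ℝ] TangentSpace J m)
    (hdρ : ∀ m : M, dρ m = mfderiv I J (fun g : G => g • m) (1 : G))
    -- the adjoint representation `Ad g = (conj g)_{*,e}`:
    (Ad : G → E →L[ℝ] E)
    (hAd : ∀ g : G, Ad g = mfderiv I I (fun h : G => g * h * g⁻¹) (1 : G))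
    -- the action is symplectic:
    (hsymp : ∀ (g : G) (m : M) (v w : TangentSpace J m),
      ω (g • m) (mfderiv J J (fun x : M => g • x) m v) (mfderiv J J (fun x : M => g • x) m w)
        = ω m v w)
    -- the momentum map `K : M → 𝔤*`:
    (K : M → E →L[ℝ] ℝ) (hK_smooth : ContMDiff J 𝓘(ℝ, E →L[ℝ] ℝ) (⊤ : ℕ∞) K)
    -- the differential of `K` at `m`:
    (dK : ∀ m : M, TangentSpace J m →L[ℝ] E →L[ℝ] ℝ)
    (hdK : ∀ m : M, dK m = mfderiv J 𝓘(ℝ, E →L[ℝ] ℝ) K m)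
    (hK_mom : ∀ (m : M) (v : TangentSpace J m) (η : E),
      dK m v η = ω m (dρ m η) v)
    -- `Ad*`-equivariance of `K`:
    (hK_equiv : ∀ (g : G) (m : M), K (g • m) = (K m).comp (Ad g⁻¹))
    -- the equivariant map `φ : 𝔤* → 𝔤`:
    (φ : (E →L[ℝ] ℝ) → E)
    (hφ : ∀ (g : G) (α : E →L[ℝ] ℝ), Ad g (φ α) = φ (α.comp (Ad g⁻¹)))
    -- the vector field `X = ω^♯ ∘ K^*φ`:
    (X : ∀ m : M, TangentSpace J m)
    (hX : ∀ (m : M) (v : TangentSpace J m),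
      ω m (X m) v = dK m v (φ (K m))) :
    ∀ (g : G) (m : M), mfderiv J J (fun x : M => g • x) m (X m) = X (g • m) := by
  intro g m
  -- smoothness of the relevant maps
  have hρg : ∀ g : G, ContMDiff J J (⊤ : ℕ∞) (fun x : M => g • x) := fun g =>
    hρ.comp (contMDiff_const.prodMk contMDiff_id)
  have horb : ∀ m : M, ContMDiff I J (⊤ : ℕ∞) (fun h : G => h • m) := fun m =>
    hρ.comp (contMDiff_id.prodMk contMDiff_const)
  have hconj : ∀ g : G, ContMDiff I I (⊤ : ℕ∞) (fun h : G => g * h * g⁻¹) := fun g =>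
    contMDiff_mul_right.comp contMDiff_mul_left
  have hconj' : ContMDiff I I (⊤ : ℕ∞) (fun h : G => g⁻¹ * h * g) := by
    have := hconj g⁻¹; simpa using this
  have hAd' : Ad g⁻¹ = mfderiv I I (fun h : G => g⁻¹ * h * g) (1 : G) := by
    rw [hAd g⁻¹]
    congr 1
    funext h
    rw [inv_inv]
  -- Ad g⁻¹ ∘ Ad g = id
  have hAdinv : ∀ η : E, Ad g⁻¹ (Ad g η) = η := by
    intro η
    have hc : ((fun h : G => g⁻¹ * h * g) ∘ (fun h : G => g * h * g⁻¹)) = id := by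
      funext h; simp [mul_assoc]
    have h2 := mfderiv_comp_apply_of_eq (x := (1 : G)) (y := (1 : G))
      (hg := hconj'.mdifferentiableAt (by simp))
      (hf := (hconj g).mdifferentiableAt (by simp)) (hy := by simp) η
    rw [hc, mfderiv_id] at h2
    rw [hAd', hAd g]
    exact h2.symm
  -- key intertwining identity: dρ (g•m) ∘ Ad g = (ρ_g)_* ∘ dρ m
  have key1 : ∀ η : E,
      dρ (g • m) (Ad g η) = mfderiv J J (fun x : M => g • x) m (dρ m η) := by
    intro η
    have hcomp : (fun h : G => h • (g • m)) =
        ((fun x : M => g • x) ∘ ((fun h : G => h • m) ∘ (fun h : G => g⁻¹ * h * g))) := by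
      funext h
      simp only [Function.comp_apply, smul_smul]
      congr 1
      group
    have hmd1 : MDifferentiableAt I J ((fun h : G => h • m) ∘ (fun h : G => g⁻¹ * h * g))
        (1 : G) := ((horb m).comp hconj').mdifferentiableAt (by simp)
    have h4 : mfderiv I J ((fun h : G => h • m) ∘ (fun h : G => g⁻¹ * h * g)) (1 : G)
        (Ad g η) = dρ m η := by
      have h4' := mfderiv_comp_apply_of_eq (x := (1 : G)) (y := (1 : G))
        (hg := (horb m).mdifferentiableAt (by simp))
        (hf := hconj'.mdifferentiableAt (by simp)) (hy := by simp) (Ad g η)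
      rw [h4', ← hdρ m, ← hAd']
      exact congrArg _ (hAdinv η)
    have h5 := mfderiv_comp_apply_of_eq (x := (1 : G)) (y := m)
      (hg := (hρg g).mdifferentiableAt (by simp)) (hf := hmd1) (hy := by simp) (Ad g η)
    have e1 : dρ (g • m) (Ad g η)
        = mfderiv I J (fun h : G => h • (g • m)) (1 : G) (Ad g η) := by rw [hdρ (g • m)]; rfl
    have e2 : mfderiv I J (fun h : G => h • (g • m)) (1 : G) (Ad g η) = mfderiv I J ((fun x : M => g • x) ∘
            ((fun h : G => h • m) ∘ (fun h : G => g⁻¹ * h * g))) (1 : G) (Ad g η) := by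
          rw [hcomp]; rfl
    exact e1.trans (e2.trans (h5.trans (by rw [h4])))
  -- (ρ_g)_* has right inverse (ρ_{g⁻¹})_*
  have hDinv : ∀ w : TangentSpace J (g • m),
      mfderiv J J (fun x : M => g • x) m
        (mfderiv J J (fun x : M => g⁻¹ • x) (g • m) w) = w := by
    intro w
    have hc2 : ((fun x : M => g • x) ∘ (fun x : M => g⁻¹ • x)) = (id : M → M) := by
      funext x; simp
    have h6 := mfderiv_comp_apply_of_eq (x := g • m) (y := m)
      (hg := (hρg g).mdifferentiableAt (by simp))
      (hf := (hρg g⁻¹).mdifferentiableAt (by simp)) (hy := inv_smul_smul g m) w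
    rw [hc2, mfderiv_id] at h6
    simpa using h6.symm
  -- main computation
  have key : ∀ w : TangentSpace J (g • m),
      ω (g • m) (mfderiv J J (fun x : M => g • x) m (X m) - X (g • m)) w = 0 := by
    intro w
    have hw : mfderiv J J (fun x : M => g • x) m
        (mfderiv J J (fun x : M => g⁻¹ • x) (g • m) w) = w := hDinv w
    set v : TangentSpace J m := mfderiv J J (fun x : M => g⁻¹ • x) (g • m) w with hv
    rw [map_sub, ContinuousLinearMap.sub_apply, sub_eq_zero, ← hw]
    calc ω (g • m) (mfderiv J J (fun x : M => g • x) m (X m))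
          (mfderiv J J (fun x : M => g • x) m v)
        = ω m (X m) v := hsymp g m _ _
      _ = dK m v (φ (K m)) := hX m v
      _ = ω m (dρ m (φ (K m))) v := hK_mom m v _
      _ = ω (g • m) (mfderiv J J (fun x : M => g • x) m (dρ m (φ (K m))))
            (mfderiv J J (fun x : M => g • x) m v) := (hsymp g m _ _).symm
      _ = ω (g • m) (dρ (g • m) (Ad g (φ (K m))))
            (mfderiv J J (fun x : M => g • x) m v) := by rw [key1 (φ (K m))]
      _ = ω (g • m) (dρ (g • m) (φ (K (g • m))))
            (mfderiv J J (fun x : M => g • x) m v) := by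
              rw [hφ g (K m), ← hK_equiv g m]
      _ = dK (g • m) (mfderiv J J (fun x : M => g • x) m v) (φ (K (g • m))) :=
            (hK_mom _ _ _).symm
      _ = ω (g • m) (X (g • m)) (mfderiv J J (fun x : M => g • x) m v) := (hX _ _).symm
  have h0 := hω_nd (g • m) _ key
  exact sub_eq_zero.mp h0
end

section
/- Let ξ be an element of the Heisenberg Lie algebra 𝔥(1,1), written ξ = a¹ξ₁ + a²ξ₂ + a³ξ₃. Then ad_ξ(𝔥(1,1))⁰ ∩ R_{Ad*} = R_{Ad*} if a¹ = a² = 0, and ad_ξ(𝔥(1,1))⁰ ∩ R_{Ad*} = ∅ if (a¹, a²) ≠ (0,0); in particular the set {ξ ∈ 𝔥(1,1) : ad_ξ(𝔥(1,1))⁰ ∩ R_{Ad*} ≠ ∅} is not dense in 𝔥(1,1). -/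
/-- Let `ξ = a¹ξ₁ + a²ξ₂ + a³ξ₃` be an element of the Heisenberg Lie
algebra `𝔥(1,1)` (basis `ξ₁, ξ₂, ξ₃`, only nonzero bracket `[ξ₁,ξ₂] = ξ₃`).  With
`R_{Ad*} = {α ∈ 𝔥(1,1)* : α(ξ₃) ≠ 0}` the set of coadjoint-regular points and
`ad_ξ(𝔥(1,1))⁰ = {α : α([ξ,η]) = 0 ∀ η}` the annihilator of the image of `ad_ξ`, we
have `ad_ξ(𝔥(1,1))⁰ ∩ R_{Ad*} = R_{Ad*}` if `a¹ = a² = 0`, and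
`ad_ξ(𝔥(1,1))⁰ ∩ R_{Ad*} = ∅` if `(a¹,a²) ≠ (0,0)`; in particular the set
`{ξ : ad_ξ(𝔥(1,1))⁰ ∩ R_{Ad*} ≠ ∅}` is not dense in `𝔥(1,1)`. -/
theorem heisenberg_annihilator_regular_not_dense
    {L : Type*} [LieRing L] [LieAlgebra ℝ L]
    [TopologicalSpace L] [IsTopologicalAddGroup L] [ContinuousSMul ℝ L] [T2Space L]
    (b : Module.Basis (Fin 3) ℝ L)
    (h01 : ⁅b 0, b 1⁆ = b 2) (h02 : ⁅b 0, b 2⁆ = 0) (h12 : ⁅b 1, b 2⁆ = 0)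
    -- the annihilator of `ad_ξ(𝔥(1,1))` and the coadjoint-regular set:
    (ann : L → Set (Module.Dual ℝ L))
    (hann : ∀ ξ : L, ann ξ = {α : Module.Dual ℝ L | ∀ η : L, α ⁅ξ, η⁆ = 0})
    (R : Set (Module.Dual ℝ L))
    (hR : R = {α : Module.Dual ℝ L | α (b 2) ≠ 0}) :
    (∀ a : Fin 3 → ℝ, a 0 = 0 ∧ a 1 = 0 →
      ann (a 0 • b 0 + a 1 • b 1 + a 2 • b 2) ∩ R = R) ∧
    (∀ a : Fin 3 → ℝ, ¬ (a 0 = 0 ∧ a 1 = 0) →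
      ann (a 0 • b 0 + a 1 • b 1 + a 2 • b 2) ∩ R = ∅) ∧
    ¬ Dense {ξ : L | (ann ξ ∩ R).Nonempty} := by
  have fd : FiniteDimensional ℝ L := Module.Finite.of_basis b
  -- b 2 is central
  have hcen : ∀ η : L, ⁅b 2, η⁆ = 0 := by
    have had : LieAlgebra.ad ℝ L (b 2) = 0 := by
      apply b.ext
      intro i
      fin_cases i <;>
        simp [LieAlgebra.ad_apply, ← lie_skew (b 2), h02, h12]
    intro η
    have := congrArg (fun f => f η) had
    simpa [LieAlgebra.ad_apply] using this
  -- Part 1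
  have part1 : ∀ a : Fin 3 → ℝ, a 0 = 0 ∧ a 1 = 0 →
      ann (a 0 • b 0 + a 1 • b 1 + a 2 • b 2) ∩ R = R := by
    rintro a ⟨ha0, ha1⟩
    have : ann (a 0 • b 0 + a 1 • b 1 + a 2 • b 2) = Set.univ := by
      rw [hann]
      ext α
      simp only [Set.mem_setOf_eq, Set.mem_univ, iff_true]
      intro η
      simp [ha0, ha1, add_lie, smul_lie, hcen]
    rw [this, Set.univ_inter]
  -- Part 2
  have part2 : ∀ a : Fin 3 → ℝ, ¬ (a 0 = 0 ∧ a 1 = 0) →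
      ann (a 0 • b 0 + a 1 • b 1 + a 2 • b 2) ∩ R = ∅ := by
    intro a ha
    rw [Set.eq_empty_iff_forall_notMem]
    rintro α ⟨hαann, hαR⟩
    rw [hann] at hαann
    rw [hR] at hαR
    have hb2 : α (b 2) ≠ 0 := hαR
    rcases not_and_or.mp ha with h0 | h1
    · have := hαann (b 1)
      have hbr : ⁅a 0 • b 0 + a 1 • b 1 + a 2 • b 2, b 1⁆ = a 0 • b 2 := by
        simp [add_lie, smul_lie, h01, ← lie_skew (b 2), h12]
      rw [hbr] at this
      simp only [map_smul, smul_eq_mul] at this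
      exact h0 ((mul_eq_zero.mp this).resolve_right hb2)
    · have := hαann (b 0)
      have hbr : ⁅a 0 • b 0 + a 1 • b 1 + a 2 • b 2, b 0⁆ = -(a 1) • b 2 := by
        have : ⁅b 1, b 0⁆ = -(b 2) := by rw [← lie_skew, h01]
        simp [add_lie, smul_lie, this, hcen, neg_smul, smul_neg]
      rw [hbr] at this
      simp only [map_smul, smul_eq_mul, neg_mul, neg_eq_zero, neg_smul, map_neg] at this
      exact h1 ((mul_eq_zero.mp this).resolve_right hb2)
  refine ⟨part1, part2, ?_⟩
  -- Part 3
  intro hd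
  set C : Set L := (b.coord 0) ⁻¹' {0} with hC
  have hCclosed : IsClosed C := by
    have hcont : Continuous (b.coord 0) := (b.coord 0).continuous_of_finiteDimensional
    exact isClosed_singleton.preimage hcont
  have hsub : {ξ : L | (ann ξ ∩ R).Nonempty} ⊆ C := by
    intro ξ hξ
    have hrepr : ξ = (b.repr ξ 0) • b 0 + (b.repr ξ 1) • b 1 + (b.repr ξ 2) • b 2 := by
      have := b.sum_repr ξ
      rw [Fin.sum_univ_three] at this
      exact this.symm
    by_contra hne
    have h01' : ¬ (b.repr ξ 0 = 0 ∧ b.repr ξ 1 = 0) := by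
      intro ⟨h0, _⟩
      exact hne (by simp [hC, Module.Basis.coord_apply, h0])
    have := part2 (fun i => b.repr ξ i) h01'
    rw [← hrepr] at this
    have hne2 : (ann ξ ∩ R).Nonempty := hξ
    rw [this] at hne2
    exact Set.not_nonempty_empty hne2
  have hb0 : b 0 ∈ C := by
    have : closure {ξ : L | (ann ξ ∩ R).Nonempty} = Set.univ := hd.closure_eq
    have hcl : closure {ξ : L | (ann ξ ∩ R).Nonempty} ⊆ C := hCclosed.closure_subset_iff.mpr hsub
    exact hcl (by rw [this]; trivial)
  have : b.coord 0 (b 0) = 0 := hb0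
  simp [Module.Basis.coord_apply] at this
end

section
/- Let ρ : G × M → M be a smooth action, m₀ a point with isotropy algebra 𝔤_{m₀}, and suppose X is G-invariant with X(s(λ)) = (σ_λ)_{*,e}(η_λ) where σ_λ = ρ_{s(λ)}. Then for any χ ∈ 𝔤_{s(λ)} and g₀ ∈ G, the curve Γ(t) = ρ(g₀ exp((η_λ + χ) t), s(λ)) is an integral curve of X with Γ(0) = ρ(g₀, s(λ)). -/
open Manifold

/-- Let `ρ : G × M → M` (written `g • m`) be a smooth action, `p = s(λ)`
a point of `M`, and suppose `X` is a `G`-invariant vector field with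
`X(p) = (σ_λ)_{*,e}(η)` where `σ_λ = ρ_p : g ↦ g • p`.  Then for any `χ` in the isotropy
Lie algebra `𝔤_p` (realized as the initial velocity of a smooth curve in the isotropy
subgroup `G_p`) and any `g₀ ∈ G`, the curve `Γ(t) = ρ(g₀ exp((η + χ) t), p)` is an
integral curve of `X` with `Γ(0) = ρ(g₀, p)`.  The one-parameter subgroup
`t ↦ exp((η + χ) t)` is encoded as a smooth homomorphism `c : ℝ → G` with initial
velocity `η + χ`. -/
theorem exp_curve_is_integral_curve
    {E : Type*} [NormedAddCommGroup E] [NormedSpace ℝ E] [FiniteDimensional ℝ E]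
    {F : Type*} [NormedAddCommGroup F] [NormedSpace ℝ F] [FiniteDimensional ℝ F]
    {G : Type*} [TopologicalSpace G] [ChartedSpace E G] [Group G]
    {I : ModelWithCorners ℝ E E} [LieGroup I (⊤ : ℕ∞) G]
    {M : Type*} [TopologicalSpace M] [ChartedSpace F M]
    {J : ModelWithCorners ℝ F F} [IsManifold J (⊤ : ℕ∞) M]
    [MulAction G M]
    (hρ : ContMDiff (I.prod J) J (⊤ : ℕ∞) fun p : G × M => p.1 • p.2)
    -- the point `p = s(λ)` and the vector field `X`:
    (p : M) (X : ∀ m : M, TangentSpace J m)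
    (hX_inv : ∀ (g : G) (m : M), mfderiv J J (fun x : M => g • x) m (X m) = X (g • m))
    -- `X(p) = (σ_λ)_{*,e}(η)` where `σ_λ = ρ_p`:
    (η : E) (hη : X p = mfderiv I J (fun g : G => g • p) (1 : G) η)
    -- `χ ∈ 𝔤_p`: initial velocity of a smooth curve in the isotropy subgroup `G_p`:
    (χ : E) (h_iso : ℝ → G) (h_iso_smooth : ContMDiff 𝓘(ℝ, ℝ) I (⊤ : ℕ∞) h_iso)
    (h_iso_one : h_iso 0 = 1) (h_iso_stab : ∀ x : ℝ, h_iso x • p = p)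
    (h_iso_vel : (mfderiv 𝓘(ℝ, ℝ) I h_iso 0 (1 : ℝ) : E) = χ)
    -- the one-parameter subgroup `c(t) = exp((η + χ) t)`:
    (c : ℝ → G) (hc_smooth : ContMDiff 𝓘(ℝ, ℝ) I (⊤ : ℕ∞) c)
    (hc_one : c 0 = 1) (hc_hom : ∀ t t' : ℝ, c (t + t') = c t * c t')
    (hc_vel : (mfderiv 𝓘(ℝ, ℝ) I c 0 (1 : ℝ) : E) = η + χ)
    (g₀ : G) :
    (fun t : ℝ => (g₀ * c t) • p) 0 = g₀ • p ∧
      IsMIntegralCurve (fun t : ℝ => (g₀ * c t) • p) X := by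
  have hσ : ContMDiff I J (⊤ : ℕ∞) (fun g : G => g • p) :=
    hρ.comp (contMDiff_id.prodMk contMDiff_const)
  -- Step A: the isotropy direction is killed by the orbit map
  have hσχ : mfderiv I J (fun g : G => g • p) (1 : G) χ = 0 := by
    have hconst : ((fun g : G => g • p) ∘ h_iso) = fun _ : ℝ => p := by
      funext x; exact h_iso_stab x
    have hcomp := mfderiv_comp (I' := I) (0 : ℝ)
      ((hσ (h_iso 0)).mdifferentiableAt (by simp))
      ((h_iso_smooth 0).mdifferentiableAt (by simp))
    rw [hconst, mfderiv_const, h_iso_one] at hcomp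
    rw [← h_iso_vel]
    show ((mfderiv I J (fun g : G => g • p) 1).comp (mfderiv 𝓘(ℝ, ℝ) I h_iso 0)) (1 : ℝ) = 0
    rw [← hcomp]
    rfl
  constructor
  · simp [hc_one]
  intro t₀
  have hF : ContMDiff J J (⊤ : ℕ∞) (fun m : M => (g₀ * c t₀) • m) :=
    hρ.comp (contMDiff_const.prodMk contMDiff_id)
  -- derivatives of pieces
  have hsub : HasMFDerivAt 𝓘(ℝ, ℝ) 𝓘(ℝ, ℝ) (fun t : ℝ => t - t₀) t₀
      (ContinuousLinearMap.id ℝ ℝ) := by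
    exact HasFDerivAt.hasMFDerivAt ((hasFDerivAt_id (𝕜 := ℝ) t₀).sub_const t₀)
  have hc0 : HasMFDerivAt 𝓘(ℝ, ℝ) I c ((fun t : ℝ => t - t₀) t₀) (mfderiv 𝓘(ℝ, ℝ) I c 0) := by
    show HasMFDerivAt 𝓘(ℝ, ℝ) I c (t₀ - t₀) (mfderiv 𝓘(ℝ, ℝ) I c 0)
    rw [sub_self]
    exact ((hc_smooth 0).mdifferentiableAt (by simp)).hasMFDerivAt
  have h1 : HasMFDerivAt 𝓘(ℝ, ℝ) I (c ∘ fun t : ℝ => t - t₀) t₀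
      ((mfderiv 𝓘(ℝ, ℝ) I c 0).comp (ContinuousLinearMap.id ℝ ℝ)) :=
    HasMFDerivAt.comp (f := fun t : ℝ => t - t₀) t₀ hc0 hsub
  have hσ1 : HasMFDerivAt I J (fun g : G => g • p) ((c ∘ fun t : ℝ => t - t₀) t₀)
      (mfderiv I J (fun g : G => g • p) (1 : G)) := by
    show HasMFDerivAt I J (fun g : G => g • p) (c (t₀ - t₀))
      (mfderiv I J (fun g : G => g • p) (1 : G))
    rw [sub_self, hc_one]
    exact ((hσ 1).mdifferentiableAt (by simp)).hasMFDerivAt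
  have h2 : HasMFDerivAt 𝓘(ℝ, ℝ) J ((fun g : G => g • p) ∘ (c ∘ fun t : ℝ => t - t₀)) t₀
      ((mfderiv I J (fun g : G => g • p) (1 : G)).comp
        ((mfderiv 𝓘(ℝ, ℝ) I c 0).comp (ContinuousLinearMap.id ℝ ℝ))) :=
    hσ1.comp t₀ h1
  have hF1 : HasMFDerivAt J J (fun m : M => (g₀ * c t₀) • m)
      (((fun g : G => g • p) ∘ (c ∘ fun t : ℝ => t - t₀)) t₀)
      (mfderiv J J (fun m : M => (g₀ * c t₀) • m) p) := by
    show HasMFDerivAt J J (fun m : M => (g₀ * c t₀) • m) (c (t₀ - t₀) • p)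
      (mfderiv J J (fun m : M => (g₀ * c t₀) • m) p)
    rw [sub_self, hc_one, one_smul]
    exact ((hF p).mdifferentiableAt (by simp)).hasMFDerivAt
  have h3 : HasMFDerivAt 𝓘(ℝ, ℝ) J
      ((fun m : M => (g₀ * c t₀) • m) ∘ ((fun g : G => g • p) ∘ (c ∘ fun t : ℝ => t - t₀))) t₀
      ((mfderiv J J (fun m : M => (g₀ * c t₀) • m) p).comp
        ((mfderiv I J (fun g : G => g • p) (1 : G)).comp
          ((mfderiv 𝓘(ℝ, ℝ) I c 0).comp (ContinuousLinearMap.id ℝ ℝ)))) :=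
    hF1.comp t₀ h2
  have hfun : ((fun m : M => (g₀ * c t₀) • m) ∘ ((fun g : G => g • p) ∘ (c ∘ fun t : ℝ => t - t₀)))
      = fun t : ℝ => (g₀ * c t) • p := by
    funext t
    have h : c t = c t₀ * c (t - t₀) := by
      rw [← hc_hom]; ring_nf
    simp only [Function.comp_apply]
    rw [h, ← mul_smul, mul_assoc]
  rw [hfun] at h3
  have hD : ((mfderiv J J (fun m : M => (g₀ * c t₀) • m) p).comp
        ((mfderiv I J (fun g : G => g • p) (1 : G)).comp
          ((mfderiv 𝓘(ℝ, ℝ) I c 0).comp (ContinuousLinearMap.id ℝ ℝ))))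
      = (1 : ℝ →L[ℝ] ℝ).smulRight (X ((fun t : ℝ => (g₀ * c t) • p) t₀)) := by
    apply ContinuousLinearMap.ext_ring
    show (mfderiv J J (fun m : M => (g₀ * c t₀) • m) p)
        ((mfderiv I J (fun g : G => g • p) 1) ((mfderiv 𝓘(ℝ, ℝ) I c 0) (1 : ℝ)))
      = ((1 : ℝ →L[ℝ] ℝ).smulRight (X ((fun t : ℝ => (g₀ * c t) • p) t₀))) (1 : ℝ)
    rw [hc_vel]; erw [map_add, hσχ, add_zero, ← hη, hX_inv]
    simp
  exact hD ▸ h3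
end
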